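/- If a connected finite simple graph G has a split (X,Y), then G is a Naji graph if and only if G_X and G_Y are both Naji graphs; moreover 2·|B(G)| ≥ |B(G_X)| · |B(G_Y)|. -/

import Mathlib

/-- A Naji solution of the simple graph `G`: an assignment of `GF(2)` values to ordered
pairs of distinct vertices (encoded as a function `V → V → ZMod 2` vanishing on the
diagonal) satisfying Naji's equations (a), (b), (c). -/
def NajiSolution {V : Type*} (G : SimpleGraph V) (β : V → V → ZMod 2) : Prop :=
  (∀ v, β v v = 0) ∧
  (∀ v w, G.Adj v w → β v w + β w v = 1) ∧
  (∀ v w x : V, v ≠ w → v ≠ x → w ≠ x →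
    G.Adj v w → ¬ G.Adj v x → ¬ G.Adj w x → β x v + β x w = 0) ∧
  (∀ v w x : V, v ≠ w → v ≠ x → w ≠ x →
    G.Adj v w → G.Adj v x → ¬ G.Adj w x →
    β v w + β v x + β w x + β x w = 1)

/-- The composition factor `G_X` of a split: the induced subgraph `G[X]` together with a
new marker vertex (the `none` vertex) whose neighbourhood is exactly `X'`. -/
def graphWithMarker {V : Type*} [DecidableEq V] (G : SimpleGraph V) (X X' : Finset V) :
    SimpleGraph (Option {x : V // x ∈ X}) where
  Adj a b :=
    match a, b with
    | some x, some y => G.Adj x.val y.val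
    | some x, none => x.val ∈ X'
    | none, some y => y.val ∈ X'
    | none, none => False
  symm := ⟨by
    rintro (_ | x) (_ | y) h
    · exact h
    · exact h
    · exact h
    · exact G.adj_symm h⟩
  loopless := ⟨by
    rintro (_ | x) h
    · exact h
    · exact G.irrefl h⟩

namespace NajiSplit

variable {V : Type*} [DecidableEq V]

@[simp] lemma gm_adj_ss (G : SimpleGraph V) (X X' : Finset V) (a b : {x : V // x ∈ X}) :
    (graphWithMarker G X X').Adj (some a) (some b) ↔ G.Adj a.val b.val := Iff.rfl

@[simp] lemma gm_adj_sn (G : SimpleGraph V) (X X' : Finset V) (a : {x : V // x ∈ X}) :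
    (graphWithMarker G X X').Adj (some a) none ↔ a.val ∈ X' := Iff.rfl

@[simp] lemma gm_adj_ns (G : SimpleGraph V) (X X' : Finset V) (b : {x : V // x ∈ X}) :
    (graphWithMarker G X X').Adj none (some b) ↔ b.val ∈ X' := Iff.rfl

@[simp] lemma gm_adj_nn (G : SimpleGraph V) (X X' : Finset V) :
    ¬ (graphWithMarker G X X').Adj none none := fun h => h

lemma zmod2_add_self (a : ZMod 2) : a + a = 0 := by
  have : (2 : ZMod 2) = 0 := by decide
  linear_combination a * this

/-- The universal kernel element of the homogeneous Naji system of a marker graph,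
based at the marker `none`. -/
def deltaM (X X' : Finset V) (v w : Option {x : V // x ∈ X}) : ZMod 2 :=
  match v, w with
  | none, none => 0
  | none, some _ => 1
  | some a, none => if a.val ∈ X' then 1 else 0
  | some _, some _ => 0

lemma delta_solution (G : SimpleGraph V) (X X' : Finset V)
    (b : Option {x : V // x ∈ X} → Option {x : V // x ∈ X} → ZMod 2)
    (hb : NajiSolution (graphWithMarker G X X') b) :
    NajiSolution (graphWithMarker G X X') (fun v w => b v w + deltaM X X' v w) := by
  obtain ⟨h0, ha, hB, hC⟩ := hb
  have h2 : (2 : ZMod 2) = 0 := by decide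
  refine ⟨?_, ?_, ?_, ?_⟩
  · rintro (_ | a) <;> simp [deltaM, h0]
  · rintro (_ | a) (_ | c) h
    · exact absurd h (by simp)
    · have hc : c.val ∈ X' := by simpa using h
      have key := ha none (some c) h
      simp only [deltaM, hc, if_true]
      first | linear_combination key | linear_combination key + h2 | linear_combination key + 2*h2
    · have hc : a.val ∈ X' := by simpa using h
      have key := ha (some a) none h
      simp only [deltaM, hc, if_true]
      first | linear_combination key | linear_combination key + h2 | linear_combination key + 2*h2
    · have key := ha (some a) (some c) h
      simp only [deltaM]
      first | linear_combination key | linear_combination key + h2 | linear_combination key + 2*h2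
  · rintro (_ | v) (_ | w) (_ | z) hvw hvz hwz hadj hn1 hn2
    · exact absurd rfl hvw
    · exact absurd rfl hvw
    · exact absurd rfl hvz
    · -- v = none, w = some w, z = some z
      have hw : w.val ∈ X' := by simpa using hadj
      have hz : ¬ z.val ∈ X' := by simpa using hn1
      have key := hB none (some w) (some z) hvw hvz hwz hadj hn1 hn2
      simp only [deltaM, hz, if_false]
      first | linear_combination key | linear_combination key + h2 | linear_combination key + 2*h2
    · exact absurd rfl hwz
    · -- w = none
      have hv : v.val ∈ X' := by simpa using hadj
      have hz : ¬ z.val ∈ X' := by simpa using hn2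
      have key := hB (some v) none (some z) hvw hvz hwz hadj hn1 hn2
      simp only [deltaM, hz, if_false]
      first | linear_combination key | linear_combination key + h2 | linear_combination key + 2*h2
    · -- z = none
      have key := hB (some v) (some w) none hvw hvz hwz hadj hn1 hn2
      simp only [deltaM]
      first | linear_combination key | linear_combination key + h2 | linear_combination key + 2*h2
    · have key := hB (some v) (some w) (some z) hvw hvz hwz hadj hn1 hn2
      simp only [deltaM]
      first | linear_combination key | linear_combination key + h2 | linear_combination key + 2*h2
  · rintro (_ | v) (_ | w) (_ | z) hvw hvz hwz hadj1 hadj2 hn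
    · exact absurd rfl hvw
    · exact absurd rfl hvw
    · exact absurd rfl hvz
    · -- v = none
      have hw : w.val ∈ X' := by simpa using hadj1
      have hz : z.val ∈ X' := by simpa using hadj2
      have key := hC none (some w) (some z) hvw hvz hwz hadj1 hadj2 hn
      simp only [deltaM]
      first | linear_combination key | linear_combination key + h2 | linear_combination key + 2*h2
    · exact absurd rfl hwz
    · -- w = none : v ∈ X', z ∉ X'
      have hv : v.val ∈ X' := by simpa using hadj1
      have hz : ¬ z.val ∈ X' := by simpa using hn
      have key := hC (some v) none (some z) hvw hvz hwz hadj1 hadj2 hn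
      simp only [deltaM, hv, hz, if_true, if_false]
      first | linear_combination key | linear_combination key + h2 | linear_combination key + 2*h2
    · -- z = none : v ∈ X', w ∉ X'
      have hv : v.val ∈ X' := by simpa using hadj2
      have hw : ¬ w.val ∈ X' := fun h => hn (by simpa using h)
      have key := hC (some v) (some w) none hvw hvz hwz hadj1 hadj2 hn
      simp only [deltaM, hv, hw, if_true, if_false]
      first | linear_combination key | linear_combination key + h2 | linear_combination key + 2*h2
    · have key := hC (some v) (some w) (some z) hvw hvz hwz hadj1 hadj2 hn
      simp only [deltaM]
      first | linear_combination key | linear_combination key + h2 | linear_combination key + 2*h2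

/-- Restricting a Naji solution of `G` to the side `X` of a split, sending the marker
to a fixed vertex `ys ∈ Y'`. -/
lemma restrict_solution (G : SimpleGraph V) (X Y X' Y' : Finset V)
    (hdisj : Disjoint X Y) (hX' : X' ⊆ X) (hY' : Y' ⊆ Y)
    (hedge : ∀ x ∈ X, ∀ y ∈ Y, (G.Adj x y ↔ x ∈ X' ∧ y ∈ Y'))
    (ys : V) (hys : ys ∈ Y') (β : V → V → ZMod 2) (hβ : NajiSolution G β) :
    NajiSolution (graphWithMarker G X X')
      (fun a b => match a, b with
        | some a, some b => β a.val b.val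
        | some a, none => β a.val ys
        | none, some b => β ys b.val
        | none, none => 0) := by
  obtain ⟨h0, ha, hB, hC⟩ := hβ
  have hysY : ys ∈ Y := hY' hys
  have hne : ∀ a : {x : V // x ∈ X}, a.val ≠ ys := by
    intro a h
    exact Finset.disjoint_left.mp hdisj a.2 (h ▸ hysY)
  have hadjy : ∀ a : {x : V // x ∈ X}, G.Adj a.val ys ↔ a.val ∈ X' := by
    intro a
    rw [hedge a.val a.2 ys hysY]
    exact ⟨fun h => h.1, fun h => ⟨h, hys⟩⟩
  have hvne : ∀ {a b : {x : V // x ∈ X}}, (some a : Option _) ≠ some b → a.val ≠ b.val := by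
    intro a b h hh
    exact h (by simp [Subtype.ext hh])
  refine ⟨?_, ?_, ?_, ?_⟩
  · rintro (_ | a)
    · rfl
    · exact h0 a.val
  · rintro (_ | a) (_ | c) h
    · exact absurd h (by simp)
    · have hc : c.val ∈ X' := by simpa using h
      exact ha ys c.val (((hadjy c).mpr hc).symm)
    · have hc : a.val ∈ X' := by simpa using h
      exact ha a.val ys ((hadjy a).mpr hc)
    · exact ha a.val c.val (by simpa using h)
  · rintro (_ | v) (_ | w) (_ | z) hvw hvz hwz hadj hn1 hn2
    · exact absurd rfl hvw
    · exact absurd rfl hvw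
    · exact absurd rfl hvz
    · -- v = none, w, z some; edge (marker, w): w ∈ X', z ∉ X', ¬Adj w z
      have hw : w.val ∈ X' := by simpa using hadj
      have hz : ¬ z.val ∈ X' := by simpa using hn1
      have hnwz : ¬ G.Adj w.val z.val := by simpa using hn2
      have key := hB w.val ys z.val (hne w) (hvne hwz) (fun h => hne z h.symm)
        ((hadjy w).mpr hw) hnwz (fun h => hz ((hadjy z).mp h.symm))
      linear_combination key
    · exact absurd rfl hwz
    · -- w = none : v ∈ X', ¬Adj v z, z ∉ X'
      have hv : v.val ∈ X' := by simpa using hadj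
      have hz : ¬ z.val ∈ X' := by simpa using hn2
      have hnvz : ¬ G.Adj v.val z.val := by simpa using hn1
      have key := hB v.val ys z.val (hne v) (hvne hvz) (fun h => hne z h.symm)
        ((hadjy v).mpr hv) hnvz (fun h => hz ((hadjy z).mp h.symm))
      linear_combination key
    · -- z = none : v, w ∈ X adjacent, both ∉ X'
      have hv : ¬ v.val ∈ X' := by simpa using hn1
      have hw : ¬ w.val ∈ X' := by simpa using hn2
      have key := hB v.val w.val ys (hvne hvw) (hne v) (hne w)
        (by simpa using hadj) (fun h => hv ((hadjy v).mp h)) (fun h => hw ((hadjy w).mp h))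
      linear_combination key
    · exact hB v.val w.val z.val (hvne hvw) (hvne hvz) (hvne hwz)
        (by simpa using hadj) (by simpa using hn1) (by simpa using hn2)
  · rintro (_ | v) (_ | w) (_ | z) hvw hvz hwz hadj1 hadj2 hn
    · exact absurd rfl hvw
    · exact absurd rfl hvw
    · exact absurd rfl hvz
    · -- v = none : w, z ∈ X', ¬Adj w z
      have hw : w.val ∈ X' := by simpa using hadj1
      have hz : z.val ∈ X' := by simpa using hadj2
      have key := hC ys w.val z.val (fun h => hne w h.symm) (fun h => hne z h.symm)
        (hvne hwz) (((hadjy w).mpr hw).symm) (((hadjy z).mpr hz).symm) (by simpa using hn)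
      linear_combination key
    · exact absurd rfl hwz
    · -- w = none : v ∈ X', Adj v z, z ∉ X'
      have hv : v.val ∈ X' := by simpa using hadj1
      have hz : ¬ z.val ∈ X' := by simpa using hn
      have key := hC v.val ys z.val (hne v) (hvne hvz) (fun h => hne z h.symm)
        ((hadjy v).mpr hv) (by simpa using hadj2)
        (fun h => hz ((hadjy z).mp h.symm))
      linear_combination key
    · -- z = none : Adj v w, v ∈ X', w ∉ X'
      have hv : v.val ∈ X' := by simpa using hadj2
      have hw : ¬ w.val ∈ X' := fun h => hn (by simpa using h)
      have key := hC v.val w.val ys (hvne hvw) (hne v) (hne w)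
        (by simpa using hadj1) ((hadjy v).mpr hv) (fun h => hw ((hadjy w).mp h))
      linear_combination key
    · exact hC v.val w.val z.val (hvne hvw) (hvne hvz) (hvne hwz)
        (by simpa using hadj1) (by simpa using hadj2) (by simpa using hn)

/-- Combining Naji solutions of the two composition factors into one of `G`. -/
def combine (X Y X' Y' : Finset V) (xs ys : V) (hxsX : xs ∈ X) (hysY : ys ∈ Y)
    (bx : Option {x : V // x ∈ X} → Option {x : V // x ∈ X} → ZMod 2)
    (b2 : Option {y : V // y ∈ Y} → Option {y : V // y ∈ Y} → ZMod 2)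
    (v w : V) : ZMod 2 :=
  if hv : v ∈ X then
    (if hw : w ∈ X then bx (some ⟨v, hv⟩) (some ⟨w, hw⟩)
     else if hw : w ∈ Y then
       bx (some ⟨v, hv⟩) none +
         (if v ∈ X' then b2 none (some ⟨w, hw⟩) + b2 none (some ⟨ys, hysY⟩) else 0)
     else 0)
  else if hv : v ∈ Y then
    (if hw : w ∈ Y then b2 (some ⟨v, hv⟩) (some ⟨w, hw⟩)
     else if hw : w ∈ X then
       b2 (some ⟨v, hv⟩) none +
         (if v ∈ Y' then bx none (some ⟨w, hw⟩) + bx none (some ⟨xs, hxsX⟩) else 0)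
     else 0)
  else 0

section CombineEval

variable {X Y X' Y' : Finset V} {xs ys : V} {hxsX : xs ∈ X} {hysY : ys ∈ Y}
  {bx : Option {x : V // x ∈ X} → Option {x : V // x ∈ X} → ZMod 2}
  {b2 : Option {y : V // y ∈ Y} → Option {y : V // y ∈ Y} → ZMod 2}
  (hdisj : Disjoint X Y)

lemma combine_XX {v w : V} (hv : v ∈ X) (hw : w ∈ X) :
    combine X Y X' Y' xs ys hxsX hysY bx b2 v w = bx (some ⟨v, hv⟩) (some ⟨w, hw⟩) := by
  simp [combine, hv, hw]

include hdisj in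
lemma combine_XY {v w : V} (hv : v ∈ X) (hw : w ∈ Y) :
    combine X Y X' Y' xs ys hxsX hysY bx b2 v w =
      bx (some ⟨v, hv⟩) none +
        (if v ∈ X' then b2 none (some ⟨w, hw⟩) + b2 none (some ⟨ys, hysY⟩) else 0) := by
  have h1 : ¬ w ∈ X := fun h => Finset.disjoint_left.mp hdisj h hw
  simp [combine, hv, hw, h1]

include hdisj in
lemma combine_YY {v w : V} (hv : v ∈ Y) (hw : w ∈ Y) :
    combine X Y X' Y' xs ys hxsX hysY bx b2 v w = b2 (some ⟨v, hv⟩) (some ⟨w, hw⟩) := by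
  have h1 : ¬ v ∈ X := fun h => Finset.disjoint_left.mp hdisj h hv
  simp [combine, hv, hw, h1]

include hdisj in
lemma combine_YX {v w : V} (hv : v ∈ Y) (hw : w ∈ X) :
    combine X Y X' Y' xs ys hxsX hysY bx b2 v w =
      b2 (some ⟨v, hv⟩) none +
        (if v ∈ Y' then bx none (some ⟨w, hw⟩) + bx none (some ⟨xs, hxsX⟩) else 0) := by
  have h1 : ¬ v ∈ X := fun h => Finset.disjoint_left.mp hdisj h hv
  have h2 : ¬ w ∈ Y := fun h => Finset.disjoint_left.mp hdisj hw h
  simp [combine, hv, hw, h1, h2]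

end CombineEval

lemma some_ne {X : Finset V} {v w : V} (hv : v ∈ X) (hw : w ∈ X) (h : v ≠ w) :
    (some ⟨v, hv⟩ : Option {x : V // x ∈ X}) ≠ some ⟨w, hw⟩ := by simp [h]

lemma combine_solution (G : SimpleGraph V) (X Y X' Y' : Finset V)
    (hpart : ∀ v : V, v ∈ X ∨ v ∈ Y) (hdisj : Disjoint X Y)
    (hX' : X' ⊆ X) (hY' : Y' ⊆ Y)
    (hedge : ∀ x ∈ X, ∀ y ∈ Y, (G.Adj x y ↔ x ∈ X' ∧ y ∈ Y'))
    (xs ys : V) (hxs : xs ∈ X') (hys : ys ∈ Y')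
    (bx : Option {x : V // x ∈ X} → Option {x : V // x ∈ X} → ZMod 2)
    (b2 : Option {y : V // y ∈ Y} → Option {y : V // y ∈ Y} → ZMod 2)
    (hbx : NajiSolution (graphWithMarker G X X') bx)
    (hb2 : NajiSolution (graphWithMarker G Y Y') b2)
    (compat : bx (some ⟨xs, hX' hxs⟩) none = b2 none (some ⟨ys, hY' hys⟩)) :
    NajiSolution G (combine X Y X' Y' xs ys (hX' hxs) (hY' hys) bx b2) := by
  have h2 : (2 : ZMod 2) = 0 := by decide
  have hh := zmod2_add_self
  set xs' : Option {x : V // x ∈ X} := some ⟨xs, hX' hxs⟩ with hxs'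
  set ys' : Option {y : V // y ∈ Y} := some ⟨ys, hY' hys⟩ with hys'
  have kxs : bx xs' none + bx none xs' = 1 := hbx.2.1 xs' none hxs
  have kys : b2 ys' none + b2 none ys' = 1 := hb2.2.1 ys' none hys
  have k3 : b2 none ys' + bx none xs' = 1 := by linear_combination kxs - compat
  -- cross adjacency helpers
  have hadjYX : ∀ {v w : V}, v ∈ Y → w ∈ X → (G.Adj v w ↔ w ∈ X' ∧ v ∈ Y') := by
    intro v w hv hw
    rw [G.adj_comm]
    exact hedge w hw v hv
  refine ⟨?_, ?_, ?_, ?_⟩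
  · -- diagonal
    intro v
    rcases hpart v with hv | hv
    · rw [combine_XX hv hv]; exact hbx.1 _
    · rw [combine_YY hdisj hv hv]; exact hb2.1 _
  · -- equation (a)
    intro v w hadj
    rcases hpart v with hv | hv <;> rcases hpart w with hw | hw
    · rw [combine_XX hv hw, combine_XX hw hv]
      exact hbx.2.1 (some ⟨v, hv⟩) (some ⟨w, hw⟩) hadj
    · obtain ⟨hv', hw'⟩ := (hedge v hv w hw).mp hadj
      rw [combine_XY hdisj hv hw, combine_YX hdisj hw hv, if_pos hv', if_pos hw']
      have k1 := hbx.2.1 (some ⟨v, hv⟩) none hv'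
      have k2 := hb2.2.1 (some ⟨w, hw⟩) none hw'
      first
        | linear_combination k1 + k2 + k3
        | linear_combination k1 + k2 + k3 + h2
        | linear_combination k1 + k2 + k3 + 2*h2
    · obtain ⟨hw', hv'⟩ := (hadjYX hv hw).mp hadj
      rw [combine_YX hdisj hv hw, combine_XY hdisj hw hv, if_pos hv', if_pos hw']
      have k1 := hbx.2.1 (some ⟨w, hw⟩) none hw'
      have k2 := hb2.2.1 (some ⟨v, hv⟩) none hv'
      first
        | linear_combination k1 + k2 + k3
        | linear_combination k1 + k2 + k3 + h2
        | linear_combination k1 + k2 + k3 + 2*h2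
    · rw [combine_YY hdisj hv hw, combine_YY hdisj hw hv]
      exact hb2.2.1 (some ⟨v, hv⟩) (some ⟨w, hw⟩) hadj
  · -- equation (b)
    intro v w z hvw hvz hwz hadj hn1 hn2
    rcases hpart v with hv | hv <;> rcases hpart w with hw | hw <;>
      rcases hpart z with hz | hz
    · -- XXX
      rw [combine_XX hz hv, combine_XX hz hw]
      exact hbx.2.2.1 (some ⟨v, hv⟩) (some ⟨w, hw⟩) (some ⟨z, hz⟩)
        (some_ne hv hw hvw) (some_ne hv hz hvz) (some_ne hw hz hwz) hadj hn1 hn2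
    · -- XXY : edge in X, z ∈ Y
      rw [combine_YX hdisj hz hv, combine_YX hdisj hz hw]
      by_cases hz' : z ∈ Y'
      · have hv' : ¬ v ∈ X' := fun h => hn1 ((hedge v hv z hz).mpr ⟨h, hz'⟩)
        have hw' : ¬ w ∈ X' := fun h => hn2 ((hedge w hw z hz).mpr ⟨h, hz'⟩)
        have key := hbx.2.2.1 (some ⟨v, hv⟩) (some ⟨w, hw⟩) none
          (some_ne hv hw hvw) (Option.some_ne_none _) (Option.some_ne_none _) hadj hv' hw'
        rw [if_pos hz', if_pos hz']
        linear_combination key + hh (b2 (some ⟨z, hz⟩) none) + hh (bx none xs')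
      · rw [if_neg hz', if_neg hz']
        simpa using hh (b2 (some ⟨z, hz⟩) none)
    · -- XYX : cross edge v w, z ∈ X
      obtain ⟨hv', hw'⟩ := (hedge v hv w hw).mp hadj
      have hz' : ¬ z ∈ X' := fun h => hn2 ((hadjYX hw hz).mpr ⟨h, hw'⟩)
      rw [combine_XX hz hv, combine_XY hdisj hz hw, if_neg hz']
      have key := hbx.2.2.1 (some ⟨v, hv⟩) none (some ⟨z, hz⟩)
        (Option.some_ne_none _) (some_ne hv hz hvz) (Ne.symm (Option.some_ne_none _))
        hv' hn1 hz'
      linear_combination key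
    · -- XYY : cross edge v w, z ∈ Y
      obtain ⟨hv', hw'⟩ := (hedge v hv w hw).mp hadj
      have hz' : ¬ z ∈ Y' := fun h => hn1 ((hedge v hv z hz).mpr ⟨hv', h⟩)
      rw [combine_YX hdisj hz hv, combine_YY hdisj hz hw, if_neg hz']
      have key := hb2.2.2.1 (some ⟨w, hw⟩) none (some ⟨z, hz⟩)
        (Option.some_ne_none _) (some_ne hw hz hwz) (Ne.symm (Option.some_ne_none _))
        hw' hn2 hz'
      linear_combination key
    · -- YXX : cross edge v w (v ∈ Y), z ∈ X
      obtain ⟨hw', hv'⟩ := (hadjYX hv hw).mp hadj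
      have hz' : ¬ z ∈ X' := fun h => hn1 (((hadjYX hv hz).mpr ⟨h, hv'⟩))
      rw [combine_XY hdisj hz hv, combine_XX hz hw, if_neg hz']
      have key := hbx.2.2.1 (some ⟨w, hw⟩) none (some ⟨z, hz⟩)
        (Option.some_ne_none _) (some_ne hw hz hwz) (Ne.symm (Option.some_ne_none _))
        hw' hn2 hz'
      linear_combination key
    · -- YXY : cross edge v w (v ∈ Y), z ∈ Y
      obtain ⟨hw', hv'⟩ := (hadjYX hv hw).mp hadj
      have hz' : ¬ z ∈ Y' := fun h => hn2 (((hadjYX hz hw).mpr ⟨hw', h⟩).symm)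
      rw [combine_YY hdisj hz hv, combine_YX hdisj hz hw, if_neg hz']
      have key := hb2.2.2.1 (some ⟨v, hv⟩) none (some ⟨z, hz⟩)
        (Option.some_ne_none _) (some_ne hv hz hvz) (Ne.symm (Option.some_ne_none _))
        hv' hn1 hz'
      linear_combination key
    · -- YYX : edge in Y, z ∈ X
      rw [combine_XY hdisj hz hv, combine_XY hdisj hz hw]
      by_cases hz' : z ∈ X'
      · have hv' : ¬ v ∈ Y' := fun h => hn1 (((hadjYX hv hz).mpr ⟨hz', h⟩))
        have hw' : ¬ w ∈ Y' := fun h => hn2 (((hadjYX hw hz).mpr ⟨hz', h⟩))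
        have key := hb2.2.2.1 (some ⟨v, hv⟩) (some ⟨w, hw⟩) none
          (some_ne hv hw hvw) (Option.some_ne_none _) (Option.some_ne_none _) hadj hv' hw'
        rw [if_pos hz', if_pos hz']
        linear_combination key + hh (bx (some ⟨z, hz⟩) none) + hh (b2 none ys')
      · rw [if_neg hz', if_neg hz']
        simpa using hh (bx (some ⟨z, hz⟩) none)
    · -- YYY
      rw [combine_YY hdisj hz hv, combine_YY hdisj hz hw]
      exact hb2.2.2.1 (some ⟨v, hv⟩) (some ⟨w, hw⟩) (some ⟨z, hz⟩)
        (some_ne hv hw hvw) (some_ne hv hz hvz) (some_ne hw hz hwz) hadj hn1 hn2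
  · -- equation (c)
    intro v w z hvw hvz hwz hadj1 hadj2 hn
    rcases hpart v with hv | hv <;> rcases hpart w with hw | hw <;>
      rcases hpart z with hz | hz
    · -- XXX
      rw [combine_XX hv hw, combine_XX hv hz, combine_XX hw hz, combine_XX hz hw]
      exact hbx.2.2.2 (some ⟨v, hv⟩) (some ⟨w, hw⟩) (some ⟨z, hz⟩)
        (some_ne hv hw hvw) (some_ne hv hz hvz) (some_ne hw hz hwz) hadj1 hadj2 hn
    · -- XXY : v,w ∈ X, z ∈ Y
      obtain ⟨hv', hz'⟩ := (hedge v hv z hz).mp hadj2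
      have hw' : ¬ w ∈ X' := fun h => hn ((hedge w hw z hz).mpr ⟨h, hz'⟩)
      rw [combine_XX hv hw, combine_XY hdisj hv hz, combine_XY hdisj hw hz,
        combine_YX hdisj hz hw, if_pos hv', if_neg hw', if_pos hz']
      have kc := hbx.2.2.2 (some ⟨v, hv⟩) (some ⟨w, hw⟩) none
        (some_ne hv hw hvw) (Option.some_ne_none _) (Option.some_ne_none _) hadj1 hv' hw'
      have kz := hb2.2.1 (some ⟨z, hz⟩) none hz'
      first
        | linear_combination kc + kz + k3
        | linear_combination kc + kz + k3 + h2
        | linear_combination kc + kz + k3 + 2*h2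
    · -- XYX : v ∈ X, w ∈ Y, z ∈ X
      obtain ⟨hv', hw'⟩ := (hedge v hv w hw).mp hadj1
      have hz' : ¬ z ∈ X' := fun h => hn (((hadjYX hw hz).mpr ⟨h, hw'⟩))
      rw [combine_XY hdisj hv hw, combine_XX hv hz, combine_YX hdisj hw hz,
        combine_XY hdisj hz hw, if_pos hv', if_pos hw', if_neg hz']
      have kc := hbx.2.2.2 (some ⟨v, hv⟩) none (some ⟨z, hz⟩)
        (Option.some_ne_none _) (some_ne hv hz hvz) (Ne.symm (Option.some_ne_none _))
        hv' hadj2 hz'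
      have kw := hb2.2.1 (some ⟨w, hw⟩) none hw'
      first
        | linear_combination kc + kw + k3
        | linear_combination kc + kw + k3 + h2
        | linear_combination kc + kw + k3 + 2*h2
    · -- XYY : v ∈ X, w,z ∈ Y
      obtain ⟨hv', hw'⟩ := (hedge v hv w hw).mp hadj1
      obtain ⟨_, hz'⟩ := (hedge v hv z hz).mp hadj2
      rw [combine_XY hdisj hv hw, combine_XY hdisj hv hz, combine_YY hdisj hw hz,
        combine_YY hdisj hz hw, if_pos hv', if_pos hv']
      have key := hb2.2.2.2 none (some ⟨w, hw⟩) (some ⟨z, hz⟩)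
        (Ne.symm (Option.some_ne_none _)) (Ne.symm (Option.some_ne_none _))
        (some_ne hw hz hwz) hw' hz' hn
      linear_combination key + hh (bx (some ⟨v, hv⟩) none) + hh (b2 none ys')
    · -- YXX : v ∈ Y, w,z ∈ X
      obtain ⟨hw', hv'⟩ := (hadjYX hv hw).mp hadj1
      obtain ⟨hz', _⟩ := (hadjYX hv hz).mp hadj2
      rw [combine_YX hdisj hv hw, combine_YX hdisj hv hz, combine_XX hw hz,
        combine_XX hz hw, if_pos hv', if_pos hv']
      have key := hbx.2.2.2 none (some ⟨w, hw⟩) (some ⟨z, hz⟩)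
        (Ne.symm (Option.some_ne_none _)) (Ne.symm (Option.some_ne_none _))
        (some_ne hw hz hwz) hw' hz' hn
      linear_combination key + hh (b2 (some ⟨v, hv⟩) none) + hh (bx none xs')
    · -- YXY : v ∈ Y, w ∈ X, z ∈ Y
      obtain ⟨hw', hv'⟩ := (hadjYX hv hw).mp hadj1
      have hz' : ¬ z ∈ Y' := fun h => hn ((hedge w hw z hz).mpr ⟨hw', h⟩)
      rw [combine_YX hdisj hv hw, combine_YY hdisj hv hz, combine_XY hdisj hw hz,
        combine_YX hdisj hz hw, if_pos hv', if_pos hw', if_neg hz']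
      have kc := hb2.2.2.2 (some ⟨v, hv⟩) none (some ⟨z, hz⟩)
        (Option.some_ne_none _) (some_ne hv hz hvz) (Ne.symm (Option.some_ne_none _))
        hv' hadj2 hz'
      have kw := hbx.2.1 (some ⟨w, hw⟩) none hw'
      first
        | linear_combination kc + kw + k3
        | linear_combination kc + kw + k3 + h2
        | linear_combination kc + kw + k3 + 2*h2
    · -- YYX : v,w ∈ Y, z ∈ X
      obtain ⟨hz', hv'⟩ := (hadjYX hv hz).mp hadj2
      have hw' : ¬ w ∈ Y' := fun h => hn (((hadjYX hw hz).mpr ⟨hz', h⟩))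
      rw [combine_YY hdisj hv hw, combine_YX hdisj hv hz, combine_YX hdisj hw hz,
        combine_XY hdisj hz hw, if_pos hv', if_neg hw', if_pos hz']
      have kc := hb2.2.2.2 (some ⟨v, hv⟩) (some ⟨w, hw⟩) none
        (some_ne hv hw hvw) (Option.some_ne_none _) (Option.some_ne_none _) hadj1 hv' hw'
      have kz := hbx.2.1 (some ⟨z, hz⟩) none hz'
      first
        | linear_combination kc + kz + k3
        | linear_combination kc + kz + k3 + h2
        | linear_combination kc + kz + k3 + 2*h2
    · -- YYY
      rw [combine_YY hdisj hv hw, combine_YY hdisj hv hz, combine_YY hdisj hw hz,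
        combine_YY hdisj hz hw]
      exact hb2.2.2.2 (some ⟨v, hv⟩) (some ⟨w, hw⟩) (some ⟨z, hz⟩)
        (some_ne hv hw hvw) (some_ne hv hz hvz) (some_ne hw hz hwz) hadj1 hadj2 hn

lemma scaled_delta_solution (G : SimpleGraph V) (X X' : Finset V) (a : ZMod 2)
    (b : Option {x : V // x ∈ X} → Option {x : V // x ∈ X} → ZMod 2)
    (hb : NajiSolution (graphWithMarker G X X') b) :
    NajiSolution (graphWithMarker G X X') (fun v w => b v w + a * deltaM X X' v w) := by
  have : a = 0 ∨ a = 1 := by revert a; decide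
  rcases this with h | h <;> rw [h]
  · simpa using hb
  · simpa using delta_solution G X X' b hb

/-- Recovery of the two factor solutions from the combined solution. -/
lemma combine_recover (G : SimpleGraph V) (X Y X' Y' : Finset V)
    (hdisj : Disjoint X Y) (hX' : X' ⊆ X) (hY' : Y' ⊆ Y)
    (xs ys : V) (hxs : xs ∈ X') (hys : ys ∈ Y')
    (bx : Option {x : V // x ∈ X} → Option {x : V // x ∈ X} → ZMod 2)
    (b2 : Option {y : V // y ∈ Y} → Option {y : V // y ∈ Y} → ZMod 2)
    (hbx : NajiSolution (graphWithMarker G X X') bx)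
    (hb2 : NajiSolution (graphWithMarker G Y Y') b2)
    (compat : bx (some ⟨xs, hX' hxs⟩) none = b2 none (some ⟨ys, hY' hys⟩)) :
    (∀ v (hv : v ∈ X),
        combine X Y X' Y' xs ys (hX' hxs) (hY' hys) bx b2 v ys = bx (some ⟨v, hv⟩) none ∧
        combine X Y X' Y' xs ys (hX' hxs) (hY' hys) bx b2 ys v = bx none (some ⟨v, hv⟩)) ∧
    (∀ y (hy : y ∈ Y),
        combine X Y X' Y' xs ys (hX' hxs) (hY' hys) bx b2 y xs = b2 (some ⟨y, hy⟩) none ∧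
        combine X Y X' Y' xs ys (hX' hxs) (hY' hys) bx b2 xs y = b2 none (some ⟨y, hy⟩)) := by
  have hh := zmod2_add_self
  have kxs : bx (some ⟨xs, hX' hxs⟩) none + bx none (some ⟨xs, hX' hxs⟩) = 1 :=
    hbx.2.1 _ none hxs
  have kys : b2 (some ⟨ys, hY' hys⟩) none + b2 none (some ⟨ys, hY' hys⟩) = 1 :=
    hb2.2.1 _ none hys
  have e1 : b2 (some ⟨ys, hY' hys⟩) none = bx none (some ⟨xs, hX' hxs⟩) := by
    linear_combination kys - kxs + compat
  refine ⟨fun v hv => ⟨?_, ?_⟩, fun y hy => ⟨?_, ?_⟩⟩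
  · rw [combine_XY hdisj hv (hY' hys)]
    by_cases h : v ∈ X' <;> simp [h, zmod2_add_self]
  · rw [combine_YX hdisj (hY' hys) hv, if_pos hys]
    linear_combination e1 + hh (bx none (some ⟨xs, hX' hxs⟩))
  · rw [combine_YX hdisj hy (hX' hxs)]
    by_cases h : y ∈ Y' <;> simp [h, zmod2_add_self]
  · rw [combine_XY hdisj (hX' hxs) hy, if_pos hxs]
    linear_combination compat + hh (b2 none (some ⟨ys, hY' hys⟩))

/-- A connected graph with a split has a cross edge. -/
lemma exists_cross (G : SimpleGraph V) (hconn : G.Connected) (X Y X' Y' : Finset V)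
    (hpart : ∀ v : V, v ∈ X ∨ v ∈ Y) (hdisj : Disjoint X Y)
    (hedge : ∀ x ∈ X, ∀ y ∈ Y, (G.Adj x y ↔ x ∈ X' ∧ y ∈ Y'))
    (hXne : X.Nonempty) (hYne : Y.Nonempty) : X'.Nonempty ∧ Y'.Nonempty := by
  obtain ⟨x, hx⟩ := hXne
  obtain ⟨y, hy⟩ := hYne
  obtain ⟨p⟩ := hconn.preconnected x y
  have aux : ∀ {u v : V} (_ : G.Walk u v), u ∈ X → v ∈ Y → X'.Nonempty ∧ Y'.Nonempty := by
    intro u v p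
    induction p with
    | nil => intro hu hv; exact absurd hv (Finset.disjoint_left.mp hdisj hu)
    | @cons a b c hab p ih =>
        intro hu hv
        rcases hpart b with hb | hb
        · exact ih hb hv
        · obtain ⟨h1, h2⟩ := (hedge a hu b hb).mp hab
          exact ⟨⟨a, h1⟩, ⟨b, h2⟩⟩
  exact aux p hx hy

end NajiSplit


open NajiSplit in
/-- If a connected graph `G` has a split `(X, Y)` (with cross edges exactly those joining
`X' ⊆ X` to `Y' ⊆ Y`), then `G` is a Naji graph iff both composition factors `G_X` and
`G_Y` are; moreover `|B(G)| ≥ |B(G_X)| · |B(G_Y)| / 2`. -/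
theorem naji_split {V : Type*} [Fintype V] [DecidableEq V]
    (G : SimpleGraph V) (hconn : G.Connected) (X Y X' Y' : Finset V)
    (hpart : ∀ v : V, v ∈ X ∨ v ∈ Y) (hdisj : Disjoint X Y)
    (hX : 2 ≤ X.card) (hY : 2 ≤ Y.card) (hX' : X' ⊆ X) (hY' : Y' ⊆ Y)
    (hedge : ∀ x ∈ X, ∀ y ∈ Y, (G.Adj x y ↔ x ∈ X' ∧ y ∈ Y')) :
    ((∃ β : V → V → ZMod 2, NajiSolution G β) ↔
      ((∃ β, NajiSolution (graphWithMarker G X X') β) ∧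
       (∃ β, NajiSolution (graphWithMarker G Y Y') β))) ∧
    Nat.card {β // NajiSolution (graphWithMarker G X X') β} *
        Nat.card {β // NajiSolution (graphWithMarker G Y Y') β} ≤
      2 * Nat.card {β : V → V → ZMod 2 // NajiSolution G β} := by
  classical
  have hXne : X.Nonempty := Finset.card_pos.mp (by omega)
  have hYne : Y.Nonempty := Finset.card_pos.mp (by omega)
  obtain ⟨⟨xs, hxs⟩, ⟨ys, hys⟩⟩ :=
    exists_cross G hconn X Y X' Y' hpart hdisj hedge hXne hYne
  have hedge' : ∀ y ∈ Y, ∀ x ∈ X, (G.Adj y x ↔ y ∈ Y' ∧ x ∈ X') := by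
    intro y hy x hx
    rw [G.adj_comm, hedge x hx y hy, and_comm]
  -- adjust the second factor so that the compatibility condition holds
  have hadj_sol : ∀ (bx : Option {x : V // x ∈ X} → Option {x : V // x ∈ X} → ZMod 2)
      (b2 : Option {y : V // y ∈ Y} → Option {y : V // y ∈ Y} → ZMod 2),
      NajiSolution (graphWithMarker G Y Y') b2 →
      NajiSolution (graphWithMarker G Y Y')
        (fun v w => b2 v w +
          (bx (some ⟨xs, hX' hxs⟩) none + b2 none (some ⟨ys, hY' hys⟩)) * deltaM Y Y' v w) :=
    fun bx b2 hb2 => scaled_delta_solution G Y Y' _ b2 hb2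
  have hadj_compat : ∀ (bx : Option {x : V // x ∈ X} → Option {x : V // x ∈ X} → ZMod 2)
      (b2 : Option {y : V // y ∈ Y} → Option {y : V // y ∈ Y} → ZMod 2),
      bx (some ⟨xs, hX' hxs⟩) none =
        (fun v w => b2 v w +
          (bx (some ⟨xs, hX' hxs⟩) none + b2 none (some ⟨ys, hY' hys⟩)) * deltaM Y Y' v w)
          none (some ⟨ys, hY' hys⟩) := by
    intro bx b2
    show _ = b2 none (some ⟨ys, hY' hys⟩) +
      (bx (some ⟨xs, hX' hxs⟩) none + b2 none (some ⟨ys, hY' hys⟩)) * deltaM Y Y' none (some ⟨ys, hY' hys⟩)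
    have hδ : deltaM Y Y' none (some ⟨ys, hY' hys⟩) = 1 := rfl
    rw [hδ]
    linear_combination - zmod2_add_self (b2 none (some ⟨ys, hY' hys⟩))
  constructor
  · constructor
    · rintro ⟨β, hβ⟩
      exact ⟨⟨_, restrict_solution G X Y X' Y' hdisj hX' hY' hedge ys hys β hβ⟩,
             ⟨_, restrict_solution G Y X Y' X' hdisj.symm hY' hX' hedge' xs hxs β hβ⟩⟩
    · rintro ⟨⟨bx, hbx⟩, ⟨b2, hb2⟩⟩
      exact ⟨_, combine_solution G X Y X' Y' hpart hdisj hX' hY' hedge xs ys hxs hys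
        bx _ hbx (hadj_sol bx b2 hb2) (hadj_compat bx b2)⟩
  · -- the cardinality bound
    set F : {β // NajiSolution (graphWithMarker G X X') β} ×
        {β // NajiSolution (graphWithMarker G Y Y') β} →
        ({β : V → V → ZMod 2 // NajiSolution G β} × ZMod 2) := fun p =>
      (⟨_, combine_solution G X Y X' Y' hpart hdisj hX' hY' hedge xs ys hxs hys
          p.1.1 _ p.1.2 (hadj_sol p.1.1 p.2.1 p.2.2) (hadj_compat p.1.1 p.2.1)⟩,
       p.1.1 (some ⟨xs, hX' hxs⟩) none + p.2.1 none (some ⟨ys, hY' hys⟩)) with hF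
    have hinj : Function.Injective F := by
      rintro ⟨⟨bx1, hbx1⟩, ⟨b21, hb21⟩⟩ ⟨⟨bx2, hbx2⟩, ⟨b22, hb22⟩⟩ heq
      simp only [hF, Prod.mk.injEq, Subtype.mk.injEq] at heq
      obtain ⟨hβ, hc⟩ := heq
      -- recovery data for the two sides
      have R1 := combine_recover G X Y X' Y' hdisj hX' hY' xs ys hxs hys
        bx1 _ hbx1 (hadj_sol bx1 b21 hb21) (hadj_compat bx1 b21)
      have R2 := combine_recover G X Y X' Y' hdisj hX' hY' xs ys hxs hys
        bx2 _ hbx2 (hadj_sol bx2 b22 hb22) (hadj_compat bx2 b22)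
      have hbxeq : bx1 = bx2 := by
        funext a b
        match a, b with
        | none, none => rw [hbx1.1 none, hbx2.1 none]
        | none, some b =>
            rw [← (R1.1 b.val b.2).2, ← (R2.1 b.val b.2).2]
            exact congrFun (congrFun hβ ys) b.val
        | some a, none =>
            rw [← (R1.1 a.val a.2).1, ← (R2.1 a.val a.2).1]
            exact congrFun (congrFun hβ a.val) ys
        | some a, some b =>
            rw [← combine_XX (X := X) (Y := Y) (X' := X') (Y' := Y') (xs := xs) (ys := ys)
              (hxsX := hX' hxs) (hysY := hY' hys) (bx := bx1)
              (b2 := fun v w => b21 v w +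
                (bx1 (some ⟨xs, hX' hxs⟩) none + b21 none (some ⟨ys, hY' hys⟩)) * deltaM Y Y' v w)
              a.2 b.2,
              ← combine_XX (X := X) (Y := Y) (X' := X') (Y' := Y') (xs := xs) (ys := ys)
              (hxsX := hX' hxs) (hysY := hY' hys) (bx := bx2)
              (b2 := fun v w => b22 v w +
                (bx2 (some ⟨xs, hX' hxs⟩) none + b22 none (some ⟨ys, hY' hys⟩)) * deltaM Y Y' v w)
              a.2 b.2]
            exact congrFun (congrFun hβ a.val) b.val
      have hb2eq : ∀ v w, b21 v w +
            (bx1 (some ⟨xs, hX' hxs⟩) none + b21 none (some ⟨ys, hY' hys⟩)) * deltaM Y Y' v w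
          = b22 v w +
            (bx2 (some ⟨xs, hX' hxs⟩) none + b22 none (some ⟨ys, hY' hys⟩)) * deltaM Y Y' v w := by
        intro a b
        match a, b with
        | none, none =>
            have e1 := (hadj_sol bx1 b21 hb21).1 none
            have e2 := (hadj_sol bx2 b22 hb22).1 none
            simp only at e1 e2
            rw [e1, e2]
        | none, some b =>
            have e1 := (R1.2 b.val b.2).2
            have e2 := (R2.2 b.val b.2).2
            rw [← e1, ← e2]
            exact congrFun (congrFun hβ xs) b.val
        | some a, none =>
            have e1 := (R1.2 a.val a.2).1
            have e2 := (R2.2 a.val a.2).1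
            rw [← e1, ← e2]
            exact congrFun (congrFun hβ a.val) xs
        | some a, some b =>
            have e1 := combine_YY (X := X) (X' := X') (Y' := Y') (xs := xs) (ys := ys)
              (hxsX := hX' hxs) (hysY := hY' hys) (bx := bx1)
              (b2 := fun v w => b21 v w +
                (bx1 (some ⟨xs, hX' hxs⟩) none + b21 none (some ⟨ys, hY' hys⟩)) * deltaM Y Y' v w)
              hdisj a.2 b.2
            have e2 := combine_YY (X := X) (X' := X') (Y' := Y') (xs := xs) (ys := ys)
              (hxsX := hX' hxs) (hysY := hY' hys) (bx := bx2)
              (b2 := fun v w => b22 v w +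
                (bx2 (some ⟨xs, hX' hxs⟩) none + b22 none (some ⟨ys, hY' hys⟩)) * deltaM Y Y' v w)
              hdisj a.2 b.2
            rw [← e1, ← e2]
            exact congrFun (congrFun hβ a.val) b.val
      have hb21eq : b21 = b22 := by
        funext v w
        have e := hb2eq v w
        rw [hbxeq] at e hc
        linear_combination e - (deltaM Y Y' v w) * hc
      simp [hbxeq, hb21eq]
    have hcard := Nat.card_le_card_of_injective F hinj
    rw [Nat.card_prod, Nat.card_prod] at hcard
    have h2 : Nat.card (ZMod 2) = 2 := by
      rw [Nat.card_eq_fintype_card, ZMod.card]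
    rw [h2, mul_comm (Nat.card {β : V → V → ZMod 2 // NajiSolution G β}) 2] at hcard
    exact hcard
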